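/- Let (u*, φ*, λ*, π*, ρ⁺*, ρ⁻*) satisfy: u* ∈ Ω; ⟨φ*, 𝟙_n⟩ = 0; ρ⁺* ≥ 0 and ρ⁻* ≥ 0 componentwise; G·u* − d − L·φ* = 0; T·B·Cᵀ·φ* = P^sch; the Euclidean projection of −∇J(u*) − Gᵀ·λ* onto the tangent cone T_Ω(u*) is 0; the Euclidean projection of B·Cᵀ·φ* − f_hi onto the tangent cone T_{[0,∞)^m}(ρ⁺*) is 0; the Euclidean projection of f_lo − B·Cᵀ·φ* onto the tangent cone T_{[0,∞)^m}(ρ⁻*) is 0; and −L·λ* + C·B·Tᵀ·π* + C·B·(ρ⁺* − ρ⁻*) = 0. Then (u*, φ*) ∈ F and J(u*) ≤ J(u) for every (u, φ) ∈ F, i.e., (u*, φ*) is an optimal solution of the dispatch problem. -/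

import Mathlib

open Matrix Filter Topology

/-- Euclidean norm on `Fin k → ℝ`. -/
noncomputable def eNorm {k : ℕ} (x : Fin k → ℝ) : ℝ := Real.sqrt (x ⬝ᵥ x)

/-- Tangent cone of `S` at `x`: closure of `{α • (z - x) : α ≥ 0, z ∈ S}`. -/
def tangentConeOf {k : ℕ} (S : Set (Fin k → ℝ)) (x : Fin k → ℝ) : Set (Fin k → ℝ) :=
  closure {y | ∃ α : ℝ, 0 ≤ α ∧ ∃ z ∈ S, y = α • (z - x)}

/-- `q` is the Euclidean projection of `y` onto `K`. -/
def IsEuclideanProj {k : ℕ} (K : Set (Fin k → ℝ)) (y q : Fin k → ℝ) : Prop :=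
  q ∈ K ∧ ∀ w ∈ K, eNorm (y - q) ≤ eNorm (y - w)

lemma dot_self_nonneg' {k : ℕ} (x : Fin k → ℝ) : 0 ≤ x ⬝ᵥ x :=
  Finset.sum_nonneg fun i _ => mul_self_nonneg _

lemma proj_zero_dot {k : ℕ} {S : Set (Fin k → ℝ)} {x y : Fin k → ℝ}
    (h : IsEuclideanProj (tangentConeOf S x) y 0) {z : Fin k → ℝ} (hz : z ∈ S) :
    y ⬝ᵥ (z - x) ≤ 0 := by
  by_contra hcon
  push_neg at hcon
  set v : Fin k → ℝ := z - x with hv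
  set c : ℝ := y ⬝ᵥ v with hc
  set q : ℝ := v ⬝ᵥ v with hqd
  have hq : 0 ≤ q := dot_self_nonneg' v
  set t : ℝ := c / (q + 1) with htd
  have ht : 0 < t := div_pos hcon (by linarith)
  have hmem : t • v ∈ tangentConeOf S x := subset_closure ⟨t, ht.le, z, hz, rfl⟩
  have h2 := h.2 _ hmem
  have hsq : (y - 0) ⬝ᵥ (y - 0) ≤ (y - t • v) ⬝ᵥ (y - t • v) := by
    have h0 : 0 ≤ (y - 0) ⬝ᵥ (y - 0) := dot_self_nonneg' _
    calc (y - 0) ⬝ᵥ (y - 0) = (eNorm (y - 0))^2 := (Real.sq_sqrt h0).symm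
    _ ≤ (eNorm (y - t • v))^2 := by
        apply pow_le_pow_left₀ (Real.sqrt_nonneg _) h2
    _ = (y - t • v) ⬝ᵥ (y - t • v) := Real.sq_sqrt (dot_self_nonneg' _)
  have hexp : (y - t • v) ⬝ᵥ (y - t • v) = y ⬝ᵥ y - 2*t*c + t^2*q := by
    simp only [sub_dotProduct, dotProduct_sub, smul_dotProduct, dotProduct_smul,
      smul_eq_mul, hqd]
    rw [dotProduct_comm v y, ← hc]
    ring
  have key : 2*t*c ≤ t^2*q := by
    simp only [sub_zero] at hsq
    rw [hexp] at hsq; linarith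
  have htq : t * q < c := by
    rw [htd, div_mul_eq_mul_div, div_lt_iff₀ (by linarith)]
    nlinarith
  nlinarith [mul_pos ht (sub_pos.mpr htq), mul_pos ht hcon]

/-- Adjoint identity for dot products. -/
lemma mulVec_dot {a b : ℕ} (A : Matrix (Fin a) (Fin b) ℝ) (x : Fin b → ℝ) (y : Fin a → ℝ) :
    (A *ᵥ x) ⬝ᵥ y = x ⬝ᵥ (Aᵀ *ᵥ y) := by
  rw [dotProduct_mulVec, vecMul_transpose, dotProduct_comm]

/-- Gradient inequality for convex differentiable functions. -/
lemma convex_grad_ineq {k : ℕ} {J : (Fin k → ℝ) → ℝ} (hJ : ContDiff ℝ 1 J)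
    (hconv : ConvexOn ℝ Set.univ J) (x y : Fin k → ℝ) :
    J x + fderiv ℝ J x (y - x) ≤ J y := by
  set g : ℝ → ℝ := fun t => J (x + t • (y - x)) with hg
  have hline : HasDerivAt (fun t : ℝ => x + t • (y - x)) (y - x) 0 := by
    simpa using ((hasDerivAt_id (0:ℝ)).smul_const (y - x)).const_add x
  have hdiff : DifferentiableAt ℝ J (x + (0:ℝ) • (y - x)) :=
    (hJ.differentiable one_ne_zero).differentiableAt
  have hgd : HasDerivAt g (fderiv ℝ J x (y - x)) 0 := by
    have := (hdiff.hasFDerivAt).comp_hasDerivAt 0 hline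
    simp only [zero_smul, add_zero] at this
    exact this
  have hslope : Filter.Tendsto (slope g 0) (𝓝[>] 0) (𝓝 (fderiv ℝ J x (y - x))) := by
    have := hasDerivAt_iff_tendsto_slope.mp hgd
    exact this.mono_left (nhdsWithin_mono _ (fun t ht => ne_of_gt ht))
  have hbound : ∀ᶠ t in 𝓝[>] (0:ℝ), slope g 0 t ≤ J y - J x := by
    filter_upwards [Ioc_mem_nhdsGT (zero_lt_one)] with t ht
    have ht0 : 0 < t := ht.1
    have ht1 : t ≤ 1 := ht.2
    have hcx : g t ≤ (1 - t) * J x + t * J y := by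
      have := hconv.2 (Set.mem_univ x) (Set.mem_univ y) (by linarith : (0:ℝ) ≤ 1 - t)
        ht0.le (by ring)
      simp only [smul_eq_mul] at this
      have heq : x + t • (y - x) = (1 - t) • x + t • y := by
        ext i; simp [smul_eq_mul]; ring
      rw [hg]; simp only [heq]; exact this
    have hg0 : g 0 = J x := by simp [hg]
    rw [slope_def_field, sub_zero, div_le_iff₀ ht0, hg0]
    nlinarith
  have := le_of_tendsto hslope hbound
  linarith

lemma isDiag_transpose_eq {k : ℕ} {B : Matrix (Fin k) (Fin k) ℝ} (hB : B.IsDiag) :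
    Bᵀ = B := by
  ext i j
  by_cases h : i = j
  · subst h; simp
  · rw [transpose_apply, hB (Ne.symm h), hB h]

theorem stmt5 {n m ng nt : ℕ} (hn : 0 < n) (hm : 0 < m) (hng : 0 < ng) (hnt : 0 < nt)
    (G : Matrix (Fin n) (Fin ng) ℝ) (C : Matrix (Fin n) (Fin m) ℝ)
    (B : Matrix (Fin m) (Fin m) ℝ) (hB : B.IsDiag)
    (T : Matrix (Fin nt) (Fin m) ℝ)
    (L : Matrix (Fin n) (Fin n) ℝ) (hL : L = C * B * Cᵀ)
    (d : Fin n → ℝ) (Psch : Fin nt → ℝ) (flo fhi : Fin m → ℝ)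
    (ulo uhi : Fin ng → ℝ) (hbox : ulo ≤ uhi)
    (Ω : Set (Fin ng → ℝ)) (hΩ : Ω = {u | ulo ≤ u ∧ u ≤ uhi})
    (J : (Fin ng → ℝ) → ℝ) (hJ : ContDiff ℝ 1 J) (hconv : ConvexOn ℝ Set.univ J)
    (gradJ : (Fin ng → ℝ) → (Fin ng → ℝ))
    (hgrad : ∀ u v : Fin ng → ℝ, fderiv ℝ J u v = gradJ u ⬝ᵥ v)
    (F : Set ((Fin ng → ℝ) × (Fin n → ℝ)))
    (hF : F = {q | q.1 ∈ Ω ∧ q.2 ⬝ᵥ (fun _ => 1) = 0 ∧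
            G *ᵥ q.1 - d - L *ᵥ q.2 = 0 ∧ (T * B * Cᵀ) *ᵥ q.2 = Psch ∧
            flo ≤ (B * Cᵀ) *ᵥ q.2 ∧ (B * Cᵀ) *ᵥ q.2 ≤ fhi})
    (ustar : Fin ng → ℝ) (φstar lam : Fin n → ℝ) (piv : Fin nt → ℝ) (rp rm : Fin m → ℝ)
    (hustar : ustar ∈ Ω)
    (hφstar : φstar ⬝ᵥ (fun _ => 1) = 0)
    (hrp : 0 ≤ rp) (hrm : 0 ≤ rm)
    (hbal : G *ᵥ ustar - d - L *ᵥ φstar = 0)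
    (htie : (T * B * Cᵀ) *ᵥ φstar = Psch)
    (hproju : IsEuclideanProj (tangentConeOf Ω ustar) (-(gradJ ustar) - Gᵀ *ᵥ lam) 0)
    (hprojp : IsEuclideanProj (tangentConeOf {s : Fin m → ℝ | 0 ≤ s} rp)
        ((B * Cᵀ) *ᵥ φstar - fhi) 0)
    (hprojm : IsEuclideanProj (tangentConeOf {s : Fin m → ℝ | 0 ≤ s} rm)
        (flo - (B * Cᵀ) *ᵥ φstar) 0)
    (hstat : -(L *ᵥ lam) + (C * B * Tᵀ) *ᵥ piv + (C * B) *ᵥ (rp - rm) = 0) :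
    (ustar, φstar) ∈ F ∧ ∀ q ∈ F, J ustar ≤ J q.1 := by
  set wst : Fin m → ℝ := (B * Cᵀ) *ᵥ φstar with hwst
  -- analysis of the two orthant projections
  have orth : ∀ (r yy : Fin m → ℝ), 0 ≤ r →
      IsEuclideanProj (tangentConeOf {s : Fin m → ℝ | 0 ≤ s} r) yy 0 →
      yy ≤ 0 ∧ yy ⬝ᵥ r = 0 := by
    intro r yy hr hproj
    constructor
    · intro i
      have hz : (0 : Fin m → ℝ) ≤ Pi.single i 1 := by
        intro j
        by_cases h : j = i
        · subst h; simp
        · simp [Pi.single_eq_of_ne h]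
      have := proj_zero_dot hproj (z := r + Pi.single i 1) (add_nonneg hr hz)
      simpa [dotProduct_single] using this
    · have h1 := proj_zero_dot hproj (z := (0 : Fin m → ℝ)) (by intro j; exact le_refl 0)
      have h2 := proj_zero_dot hproj (z := (2:ℝ) • r)
        (by intro j; simpa using mul_nonneg zero_le_two (hr j))
      have e1 : (2:ℝ) • r - r = r := by ext j; simp [smul_eq_mul]; ring
      rw [e1] at h2
      simp only [zero_sub, dotProduct_neg] at h1
      linarith
  have hp := orth rp (wst - fhi) hrp hprojp
  have hmle := orth rm (flo - wst) hrm hprojm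
  have hwhi : wst ≤ fhi := fun i => by have := hp.1 i; simpa [sub_nonpos] using this
  have hwlo : flo ≤ wst := fun i => by have := hmle.1 i; simpa [sub_nonpos] using this
  have hfeas : (ustar, φstar) ∈ F := by
    rw [hF]; exact ⟨hustar, hφstar, hbal, htie, hwlo, hwhi⟩
  refine ⟨hfeas, ?_⟩
  rintro ⟨u, φ⟩ hq
  rw [hF] at hq
  obtain ⟨hu, _, hbal', htie', hlo', hhi'⟩ := hq
  set w : Fin m → ℝ := (B * Cᵀ) *ᵥ φ with hw
  -- gradient inequality
  have hgi : J ustar + gradJ ustar ⬝ᵥ (u - ustar) ≤ J u := by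
    have := convex_grad_ineq hJ hconv ustar u
    rwa [hgrad] at this
  -- tangent cone at ustar
  have hvi : (-(gradJ ustar) - Gᵀ *ᵥ lam) ⬝ᵥ (u - ustar) ≤ 0 := proj_zero_dot hproju hu
  -- G(u - ustar) = L(φ - φstar)
  have hGL : G *ᵥ (u - ustar) = L *ᵥ (φ - φstar) := by
    have h1 : G *ᵥ u - d - L *ᵥ φ = G *ᵥ ustar - d - L *ᵥ φstar := by rw [hbal', hbal]
    rw [mulVec_sub, mulVec_sub]
    ext i
    have := congrFun h1 i
    simp only [Pi.sub_apply] at this ⊢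
    linarith
  -- symmetry of L and B
  have hBt : Bᵀ = B := isDiag_transpose_eq hB
  have hLt : Lᵀ = L := by rw [hL, transpose_mul, transpose_mul, transpose_transpose, hBt, Matrix.mul_assoc]
  -- key chain
  have hLlam : L *ᵥ lam = (C * B * Tᵀ) *ᵥ piv + (C * B) *ᵥ (rp - rm) := by
    ext i; have := congrFun hstat i
    simp only [Pi.add_apply, Pi.neg_apply, Pi.zero_apply] at this ⊢
    linarith
  have hterm1 : ((C * B * Tᵀ) *ᵥ piv) ⬝ᵥ (φ - φstar) = 0 := by
    rw [mulVec_dot]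
    have : (C * B * Tᵀ)ᵀ *ᵥ (φ - φstar) = 0 := by
      rw [transpose_mul, transpose_mul, transpose_transpose, hBt, ← Matrix.mul_assoc,
        mulVec_sub, htie', htie]
      simp
    rw [this, dotProduct_zero]
  have hterm2 : ((C * B) *ᵥ (rp - rm)) ⬝ᵥ (φ - φstar) = (rp - rm) ⬝ᵥ (w - wst) := by
    rw [mulVec_dot, transpose_mul, hBt, mulVec_sub, hw, hwst]
  -- sign of (rp - rm) ⬝ (w - wst)
  have hrpw : rp ⬝ᵥ (w - wst) ≤ 0 := by
    have hsplit : rp ⬝ᵥ (w - wst) = rp ⬝ᵥ (w - fhi) - rp ⬝ᵥ (wst - fhi) := by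
      rw [dotProduct_sub, dotProduct_sub, dotProduct_sub]; ring
    have hz : rp ⬝ᵥ (wst - fhi) = 0 := by rw [dotProduct_comm]; exact hp.2
    have hneg : rp ⬝ᵥ (w - fhi) ≤ 0 :=
      Finset.sum_nonpos fun i _ => mul_nonpos_of_nonneg_of_nonpos (hrp i)
        (by have := hhi' i; simp only [Pi.sub_apply]; linarith)
    rw [hsplit, hz]; linarith
  have hrmw : 0 ≤ rm ⬝ᵥ (w - wst) := by
    have hsplit : rm ⬝ᵥ (w - wst) = rm ⬝ᵥ (w - flo) - rm ⬝ᵥ (wst - flo) := by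
      rw [dotProduct_sub, dotProduct_sub, dotProduct_sub]; ring
    have hz : rm ⬝ᵥ (wst - flo) = 0 := by
      have := hmle.2
      rw [dotProduct_comm] at this
      have e : rm ⬝ᵥ (wst - flo) = -(rm ⬝ᵥ (flo - wst)) := by
        rw [dotProduct_sub, dotProduct_sub]; ring
      rw [e, this, neg_zero]
    have hpos : 0 ≤ rm ⬝ᵥ (w - flo) :=
      Finset.sum_nonneg fun i _ => mul_nonneg (hrm i)
        (by have := hlo' i; simp only [Pi.sub_apply]; linarith)
    rw [hsplit, hz]; linarith
  -- assemble
  have hkey : 0 ≤ gradJ ustar ⬝ᵥ (u - ustar) := by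
    have e1 : (-(gradJ ustar) - Gᵀ *ᵥ lam) ⬝ᵥ (u - ustar)
        = -(gradJ ustar ⬝ᵥ (u - ustar)) - (Gᵀ *ᵥ lam) ⬝ᵥ (u - ustar) := by
      rw [sub_dotProduct, neg_dotProduct]
    have e2 : (Gᵀ *ᵥ lam) ⬝ᵥ (u - ustar) = lam ⬝ᵥ (G *ᵥ (u - ustar)) := by
      rw [dotProduct_comm, ← mulVec_dot, dotProduct_comm]
    have e3 : lam ⬝ᵥ (L *ᵥ (φ - φstar)) = (L *ᵥ lam) ⬝ᵥ (φ - φstar) := by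
      rw [mulVec_dot, hLt, dotProduct_comm]
    have e4 : (L *ᵥ lam) ⬝ᵥ (φ - φstar) = (rp - rm) ⬝ᵥ (w - wst) := by
      rw [hLlam, add_dotProduct, hterm1, hterm2, zero_add]
    have e5 : (rp - rm) ⬝ᵥ (w - wst) ≤ 0 := by
      rw [sub_dotProduct]; linarith
    rw [e1] at hvi
    rw [e2, hGL, e3, e4] at hvi
    linarith
  linarith
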